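/- Let X = Σ_{m=1}^{M} a_m ψ_{i_m} ψ_{j_m}* with i_m ≥ 0, j_m < 0 for all m. Then in the Clifford algebra, (ad X)(Λ_k) = Σ_{m=1}^{M} a_m (ψ_{i_m} ψ_{j_m+k}* − ψ_{i_m−k} ψ_{j_m}*), (ad X)^2(Λ_k) = −2 Σ_{m,n=1}^{M} δ_{i_m, j_n+k} a_m a_n ψ_{i_n} ψ_{j_m}*, and (ad X)^n(Λ_k) = 0 for all n ≥ 3. -/
import Mathlib

lemma cliff_helper {R : Type*} [Ring R] (pa pb qc qd δ1 δ2 : R)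
    (e1 : pb * qc = δ1 - qc * pb)
    (e2 : qd * pa = δ2 - pa * qd)
    (swap : pa * qc * (pb * qd) = qc * pa * (qd * pb))
    (c1 : pa * δ1 = δ1 * pa) (c2 : qc * δ2 = δ2 * qc) :
    (pa * pb) * (qc * qd) - (qc * qd) * (pa * pb)
      = δ1 * (pa * qd) - δ2 * (qc * pb) := by
  have p1 : (pa * pb) * (qc * qd) = pa * ((pb * qc) * qd) := by noncomm_ring
  have p2 : (qc * qd) * (pa * pb) = qc * ((qd * pa) * pb) := by noncomm_ring
  rw [p1, p2, e1, e2]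
  have expand : pa * ((δ1 - qc * pb) * qd) - qc * ((δ2 - pa * qd) * pb)
      = pa * δ1 * qd - qc * δ2 * pb - (pa * qc * (pb * qd) - qc * pa * (qd * pb)) := by
    noncomm_ring
  rw [expand, swap, sub_self, sub_zero, c1, c2, mul_assoc, mul_assoc]

lemma quad_comm {R : Type*} [Ring R] (ψ ψs : ℤ → R)
    (h1 : ∀ i j : ℤ, ψ i * ψs j + ψs j * ψ i = if i = j then 1 else 0)
    (h2 : ∀ i j : ℤ, ψ i * ψ j + ψ j * ψ i = 0)
    (h3 : ∀ i j : ℤ, ψs i * ψs j + ψs j * ψs i = 0)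
    (a b c d : ℤ) :
    (ψ a * ψs b) * (ψ c * ψs d) - (ψ c * ψs d) * (ψ a * ψs b)
      = (if c = b then (1:R) else 0) * (ψ a * ψs d)
        - (if a = d then (1:R) else 0) * (ψ c * ψs b) := by
  refine cliff_helper (ψ a) (ψs b) (ψ c) (ψs d) _ _
    (eq_sub_of_add_eq' (h1 c b)) (eq_sub_of_add_eq' (h1 a d)) ?_ ?_ ?_
  · rw [eq_neg_of_add_eq_zero_left (h2 a c), eq_neg_of_add_eq_zero_left (h3 b d)]
    noncomm_ring
  · split <;> simp
  · split <;> simp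



/-- For `X = Σ_{m=1}^{M} a_m ψ_{i_m} ψ*_{j_m}` with `i_m ≥ 0`, `j_m < 0`,
the adjoint action on `Λ_k = Σ_{n∈ℤ} ψ_n ψ*_{n+k}` (whose commutation with quadratic
elements, `[ψ_a ψ*_b, Λ_k] = ψ_a ψ*_{b+k} − ψ_{a−k} ψ*_b`, is recorded as a hypothesis)
satisfies `(ad X)(Λ_k) = Σ_m a_m (ψ_{i_m} ψ*_{j_m+k} − ψ_{i_m−k} ψ*_{j_m})`,
`(ad X)²(Λ_k) = −2 Σ_{m,n} δ_{i_m, j_n+k} a_m a_n ψ_{i_n} ψ*_{j_m}`, and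
`(ad X)^n(Λ_k) = 0` for all `n ≥ 3`. -/
theorem stmt3 {R : Type*} [Ring R] [Algebra ℚ R]
    (ψ ψs : ℤ → R)
    (h1 : ∀ i j : ℤ, ψ i * ψs j + ψs j * ψ i = if i = j then 1 else 0)
    (h2 : ∀ i j : ℤ, ψ i * ψ j + ψ j * ψ i = 0)
    (h3 : ∀ i j : ℤ, ψs i * ψs j + ψs j * ψs i = 0)
    (Λ : ℤ → R)
    (hΛ : ∀ a b k : ℤ,
      (ψ a * ψs b) * Λ k - Λ k * (ψ a * ψs b) = ψ a * ψs (b + k) - ψ (a - k) * ψs b)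
    (M : ℕ) (a : Fin M → ℚ) (i j : Fin M → ℤ)
    (hi : ∀ m, 0 ≤ i m) (hj : ∀ m, j m < 0)
    (X : R) (hX : X = ∑ m, a m • (ψ (i m) * ψs (j m))) (k : ℤ) :
    (X * Λ k - Λ k * X
        = ∑ m, a m • (ψ (i m) * ψs (j m + k) - ψ (i m - k) * ψs (j m)))
    ∧ ((fun Z => X * Z - Z * X)^[2] (Λ k)
        = (-2 : ℚ) • ∑ m, ∑ p, (if i m = j p + k then a m * a p else 0) • (ψ (i p) * ψs (j m)))
    ∧ (∀ n : ℕ, 3 ≤ n → (fun Z => X * Z - Z * X)^[n] (Λ k) = 0) := by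
  have hne : ∀ m n : Fin M, i m ≠ j n := by
    intro m n h
    have := hi m; have := hj n; omega
  -- the workhorse: commutator of X with anything, expanded as a sum
  have hfy : ∀ y : R, X * y - y * X
      = ∑ n, a n • ((ψ (i n) * ψs (j n)) * y - y * (ψ (i n) * ψs (j n))) := by
    intro y
    rw [hX, Finset.sum_mul, Finset.mul_sum, ← Finset.sum_sub_distrib]
    exact Finset.sum_congr rfl fun n _ => by rw [smul_mul_assoc, mul_smul_comm, smul_sub]
  -- special commutators
  have qc1 : ∀ m n : Fin M,
      (ψ (i n) * ψs (j n)) * (ψ (i m) * ψs (j m + k))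
        - (ψ (i m) * ψs (j m + k)) * (ψ (i n) * ψs (j n))
      = -((if i n = j m + k then (1:R) else 0) * (ψ (i m) * ψs (j n))) := by
    intro m n
    rw [quad_comm ψ ψs h1 h2 h3 (i n) (j n) (i m) (j m + k),
      if_neg (hne m n), zero_mul, zero_sub]
  have qc2 : ∀ m n : Fin M,
      (ψ (i n) * ψs (j n)) * (ψ (i m - k) * ψs (j m))
        - (ψ (i m - k) * ψs (j m)) * (ψ (i n) * ψs (j n))
      = (if i m - k = j n then (1:R) else 0) * (ψ (i n) * ψs (j m)) := by
    intro m n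
    rw [quad_comm ψ ψs h1 h2 h3 (i n) (j n) (i m - k) (j m),
      if_neg (hne n m), zero_mul, sub_zero]
  have qc0 : ∀ m n p : Fin M,
      (ψ (i p) * ψs (j p)) * (ψ (i n) * ψs (j m))
        - (ψ (i n) * ψs (j m)) * (ψ (i p) * ψs (j p)) = 0 := by
    intro m n p
    rw [quad_comm ψ ψs h1 h2 h3 (i p) (j p) (i n) (j m),
      if_neg (hne n p), if_neg (hne p m), zero_mul, zero_mul, sub_zero]
  -- Part 1
  have part1 : X * Λ k - Λ k * X
      = ∑ m, a m • (ψ (i m) * ψs (j m + k) - ψ (i m - k) * ψs (j m)) := by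
    rw [hfy]
    exact Finset.sum_congr rfl fun m _ => by rw [hΛ]
  -- scalar bookkeeping
  have term_eq : ∀ m n : Fin M,
      a m • (a n • (-((if i n = j m + k then (1:R) else 0) * (ψ (i m) * ψs (j n)))
          - (if i m - k = j n then (1:R) else 0) * (ψ (i n) * ψs (j m))))
      = -((if i n = j m + k then a n * a m else 0) • (ψ (i m) * ψs (j n)))
        - (if i m = j n + k then a m * a n else 0) • (ψ (i n) * ψs (j m)) := by
    intro m n
    have hiff : (i m - k = j n) = (i m = j n + k) :=
      propext ⟨fun h => by omega, fun h => by omega⟩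
    simp only [hiff]
    by_cases cA : i n = j m + k <;> by_cases cB : i m = j n + k <;>
      simp [cA, cB, smul_smul, smul_sub, smul_neg, mul_comm]
  have part2 : (fun Z => X * Z - Z * X)^[2] (Λ k)
      = (-2 : ℚ) • ∑ m, ∑ p, (if i m = j p + k then a m * a p else 0) • (ψ (i p) * ψs (j m)) := by
    show X * (X * Λ k - Λ k * X) - (X * Λ k - Λ k * X) * X = _
    rw [part1, Finset.mul_sum, Finset.sum_mul, ← Finset.sum_sub_distrib]
    have keym : ∀ m : Fin M,
        X * (a m • (ψ (i m) * ψs (j m + k) - ψ (i m - k) * ψs (j m)))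
          - (a m • (ψ (i m) * ψs (j m + k) - ψ (i m - k) * ψs (j m))) * X
        = ∑ n, (-((if i n = j m + k then a n * a m else 0) • (ψ (i m) * ψs (j n)))
            - (if i m = j n + k then a m * a n else 0) • (ψ (i n) * ψs (j m))) := by
      intro m
      rw [mul_smul_comm, smul_mul_assoc, ← smul_sub]
      rw [show X * (ψ (i m) * ψs (j m + k) - ψ (i m - k) * ψs (j m))
            - (ψ (i m) * ψs (j m + k) - ψ (i m - k) * ψs (j m)) * X
          = (X * (ψ (i m) * ψs (j m + k)) - (ψ (i m) * ψs (j m + k)) * X)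
            - (X * (ψ (i m - k) * ψs (j m)) - (ψ (i m - k) * ψs (j m)) * X) from by noncomm_ring]
      rw [hfy, hfy, ← Finset.sum_sub_distrib, Finset.smul_sum]
      refine Finset.sum_congr rfl fun n _ => ?_
      rw [← smul_sub, qc1 m n, qc2 m n]
      exact term_eq m n
    rw [Finset.sum_congr rfl fun m _ => keym m]
    simp only [Finset.sum_sub_distrib, Finset.sum_neg_distrib]
    rw [show (∑ m : Fin M, ∑ n : Fin M,
        (if i n = j m + k then a n * a m else 0) • (ψ (i m) * ψs (j n)))
      = ∑ m : Fin M, ∑ n : Fin M,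
        (if i m = j n + k then a m * a n else 0) • (ψ (i n) * ψs (j m)) from Finset.sum_comm]
    generalize (∑ m : Fin M, ∑ n : Fin M,
        (if i m = j n + k then a m * a n else 0) • (ψ (i n) * ψs (j m))) = S
    rw [show ((-2 : ℚ)) = -(1 + 1) by norm_num, neg_smul, add_smul, one_smul]
    abel
  refine ⟨part1, part2, ?_⟩
  -- Part 3
  have hzero : ∀ m n : Fin M,
      X * (ψ (i n) * ψs (j m)) - (ψ (i n) * ψs (j m)) * X = 0 := by
    intro m n
    rw [hfy]
    exact Finset.sum_eq_zero fun p _ => by rw [qc0 m n p, smul_zero]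
  have part3 : (fun Z => X * Z - Z * X)^[3] (Λ k) = 0 := by
    have h32 : (fun Z => X * Z - Z * X)^[3] (Λ k)
        = (fun Z => X * Z - Z * X) ((fun Z => X * Z - Z * X)^[2] (Λ k)) :=
      Function.iterate_succ_apply' _ 2 _
    rw [h32, part2]
    show X * ((-2:ℚ) • _) - ((-2:ℚ) • _) * X = 0
    rw [mul_smul_comm, smul_mul_assoc, ← smul_sub]
    rw [Finset.mul_sum, Finset.sum_mul, ← Finset.sum_sub_distrib]
    rw [Finset.sum_eq_zero, smul_zero]
    intro m _
    rw [Finset.mul_sum, Finset.sum_mul, ← Finset.sum_sub_distrib]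
    refine Finset.sum_eq_zero fun n _ => ?_
    rw [mul_smul_comm, smul_mul_assoc, ← smul_sub, hzero m n, smul_zero]
  intro n hn
  obtain ⟨p, rfl⟩ : ∃ p, n = p + 3 := ⟨n - 3, by omega⟩
  rw [Function.iterate_add_apply, part3]
  induction p with
  | zero => rfl
  | succ q ih =>
      rw [Function.iterate_succ_apply]
      simpa using ih
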